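/- (Zero dynamics, equation (25) of the paper.) If in addition there is an invertible p×p real matrix C such that the output y(t) = C · x_α(t) vanishes for all t, then x_α(t) = 0 for all t, the curve η(t) = N(t)ᵀ x_α(t) + x_β(t) coincides with x_β, and η is differentiable at t₀ with η'(t₀) = M₂₂(t₀)⁻¹ l_β(t₀). -/
import Mathlib


open Matrix

/-- (Zero dynamics, equation (25) of the paper.) If in addition there is an invertible
p×p real matrix C such that the output y(t) = C · x_α(t) vanishes for all t, then
x_α(t) = 0 for all t, the curve η(t) = N(t)ᵀ x_α(t) + x_β(t) coincides with x_β,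
and η is differentiable at t₀ with η'(t₀) = M₂₂(t₀)⁻¹ l_β(t₀). -/
theorem stmt_9 {p q : ℕ}
    (M₁₁ : ℝ → Matrix (Fin p) (Fin p) ℝ) (M₁₂ : ℝ → Matrix (Fin p) (Fin q) ℝ)
    (M₂₂ : ℝ → Matrix (Fin q) (Fin q) ℝ)
    (M : ℝ → Matrix (Fin p ⊕ Fin q) (Fin p ⊕ Fin q) ℝ)
    (hM : ∀ t, M t = Matrix.fromBlocks (M₁₁ t) (M₁₂ t) (M₁₂ t)ᵀ (M₂₂ t))
    (hM₁₁sym : ∀ t, (M₁₁ t)ᵀ = M₁₁ t) (hM₂₂sym : ∀ t, (M₂₂ t)ᵀ = M₂₂ t)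
    (hM₂₂inv : ∀ t, IsUnit (M₂₂ t)) (hMinv : ∀ t, IsUnit (M t))
    (N : ℝ → Matrix (Fin p) (Fin q) ℝ) (hN : ∀ t, N t = M₁₂ t * (M₂₂ t)⁻¹)
    (G : ℝ → Matrix (Fin p ⊕ Fin q) (Fin p) ℝ)
    (hG : ∀ t, G t = (M t)⁻¹ *
      Matrix.fromRows (1 : Matrix (Fin p) (Fin p) ℝ) (0 : Matrix (Fin q) (Fin p) ℝ))
    (x : ℝ → (Fin p ⊕ Fin q) → ℝ) (l : ℝ → (Fin p ⊕ Fin q) → ℝ) (τ : ℝ → Fin p → ℝ)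
    (xα : ℝ → Fin p → ℝ) (hxα : ∀ t i, xα t i = x t (Sum.inl i))
    (xβ : ℝ → Fin q → ℝ) (hxβ : ∀ t j, xβ t j = x t (Sum.inr j))
    (lβ : ℝ → Fin q → ℝ) (hlβ : ∀ t j, lβ t j = l t (Sum.inr j))
    (t₀ : ℝ)
    (hx : HasDerivAt x ((M t₀)⁻¹.mulVec (l t₀) + (G t₀).mulVec (τ t₀)) t₀)
    (N' : Matrix (Fin p) (Fin q) ℝ)
    (hN' : ∀ i k, HasDerivAt (fun t => N t i k) (N' i k) t₀)
    (η : ℝ → Fin q → ℝ)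
    (hη : ∀ t, η t = (N t)ᵀ.mulVec (xα t) + xβ t)
    (C : Matrix (Fin p) (Fin p) ℝ) (hC : IsUnit C)
    (y : ℝ → Fin p → ℝ) (hy : ∀ t, y t = C.mulVec (xα t))
    (hy0 : ∀ t, y t = 0) :
    (∀ t, xα t = 0) ∧ (∀ t, η t = xβ t) ∧
      HasDerivAt η (((M₂₂ t₀)⁻¹).mulVec (lβ t₀)) t₀ := by

  have hCd : IsUnit C.det := (Matrix.isUnit_iff_isUnit_det C).mp hC
  have hxα0 : ∀ t, xα t = 0 := by
    intro t
    have h := hy0 t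
    rw [hy t] at h
    calc xα t = C⁻¹.mulVec (C.mulVec (xα t)) := by
          rw [Matrix.mulVec_mulVec, Matrix.nonsing_inv_mul C hCd, Matrix.one_mulVec]
      _ = 0 := by rw [h, Matrix.mulVec_zero]
  have hηβ : ∀ t, η t = xβ t := by
    intro t
    rw [hη t, hxα0 t, Matrix.mulVec_zero, zero_add]
  refine ⟨hxα0, hηβ, ?_⟩
  set d := (M t₀)⁻¹.mulVec (l t₀) + (G t₀).mulVec (τ t₀) with hd
  have hcomp : ∀ i, HasDerivAt (fun t => x t i) (d i) t₀ := hasDerivAt_pi.mp hx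
  have hdα : ∀ i, d (Sum.inl i) = 0 := by
    intro i
    have h1 : HasDerivAt (fun t => x t (Sum.inl i)) (d (Sum.inl i)) t₀ := hcomp _
    have h2 : (fun t => x t (Sum.inl i)) = fun _ => (0:ℝ) := by
      funext t
      rw [← hxα t i, hxα0 t]; rfl
    rw [h2] at h1
    exact h1.unique (hasDerivAt_const _ _)
  have hMd : IsUnit (M t₀).det := (Matrix.isUnit_iff_isUnit_det _).mp (hMinv t₀)
  have hM22d : IsUnit (M₂₂ t₀).det := (Matrix.isUnit_iff_isUnit_det _).mp (hM₂₂inv t₀)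
  have hMinvVec : ∀ v, (M t₀).mulVec ((M t₀)⁻¹.mulVec v) = v := by
    intro v
    rw [Matrix.mulVec_mulVec, Matrix.mul_nonsing_inv _ hMd, Matrix.one_mulVec]
  have hMd2 : (M t₀).mulVec d = l t₀ +
      (Matrix.fromRows (1 : Matrix (Fin p) (Fin p) ℝ) 0).mulVec (τ t₀) := by
    rw [hd, Matrix.mulVec_add, hMinvVec, hG t₀, ← Matrix.mulVec_mulVec, hMinvVec]
  set dβ : Fin q → ℝ := fun j => d (Sum.inr j) with hdβ
  have hdsum : d = Sum.elim (fun i => d (Sum.inl i)) dβ := by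
    funext i; cases i <;> rfl
  have hkey : (M₂₂ t₀).mulVec dβ = lβ t₀ := by
    funext j
    have := congrFun hMd2 (Sum.inr j)
    rw [hM t₀, hdsum] at this
    rw [Matrix.fromBlocks_mulVec] at this
    simp only [Sum.elim_inr, Pi.add_apply, Sum.elim_comp_inl, Sum.elim_comp_inr] at this
    have hz : (fun i => d (Sum.inl i)) = (0 : Fin p → ℝ) := funext hdα
    rw [hz, Matrix.mulVec_zero] at this
    have hfr : (Matrix.fromRows (1 : Matrix (Fin p) (Fin p) ℝ)
        (0 : Matrix (Fin q) (Fin p) ℝ)).mulVec (τ t₀) (Sum.inr j) = 0 := by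
      simp [Matrix.mulVec, dotProduct]
    rw [hfr, add_zero] at this
    simpa [hlβ] using this
  have hdβval : dβ = ((M₂₂ t₀)⁻¹).mulVec (lβ t₀) := by
    rw [← hkey, Matrix.mulVec_mulVec, Matrix.nonsing_inv_mul _ hM22d, Matrix.one_mulVec]
  have hxβd : HasDerivAt xβ dβ t₀ := by
    rw [hasDerivAt_pi]
    intro j
    have h1 := hcomp (Sum.inr j)
    have h2 : (fun t => x t (Sum.inr j)) = fun t => xβ t j := by
      funext t; rw [hxβ t j]
    rw [h2] at h1
    exact h1
  have hηfun : η = xβ := funext hηβ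
  rw [hηfun, ← hdβval]
  exact hxβd
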